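/- Let n ≥ 2 and η > 0, and for each prime p let G^{(p)} be a polynomial system of type η over 𝔽_p with uniformly bounded implied constant. Then the measures μ_{G^{(p)}} equidistribute: for every continuous f : 𝕋ⁿ → ℂ with absolutely summable Fourier series, ∫_{𝕋ⁿ} f dμ_{G^{(p)}} → ∫_{𝕋ⁿ} f(x) dx as p → ∞. -/

import Mathlib

open scoped Real
open MeasureTheory

instance : Fact ((0:ℝ) < 1) := ⟨one_pos⟩

/-- `e_p(r) = exp(2πi r / p)`. -/
noncomputable def ep (p : ℕ) (r : ℤ) : ℂ :=
  Complex.exp (2 * Real.pi * Complex.I * r / p)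

/-- The Weyl sum `S_G(v)` attached to a polynomial system `G` over `𝔽_p`. -/
noncomputable def weylSum (p m n : ℕ) [NeZero p] (G : Fin n → MvPolynomial (Fin m) (ZMod p))
    (v : Fin n → ℤ) : ℂ :=
  ∑ x : Fin m → ZMod p,
    ep p (((∑ j, (v j : ZMod p) * MvPolynomial.eval x (G j)).val : ℕ) : ℤ)

/-- The point `G(x)/p ∈ 𝕋ⁿ`. -/
noncomputable def torusPoint (p m n : ℕ) [NeZero p]
    (G : Fin n → MvPolynomial (Fin m) (ZMod p)) (x : Fin m → ZMod p) :
    Fin n → AddCircle (1:ℝ) :=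
  fun j => ((((MvPolynomial.eval x (G j)).val : ℝ) / p : ℝ) : AddCircle (1:ℝ))

/-- The Euclidean (geodesic) distance on the torus `𝕋ⁿ`. -/
noncomputable def torusDist {n : ℕ} (t y : Fin n → AddCircle (1:ℝ)) : ℝ :=
  Real.sqrt (∑ j, ‖t j - y j‖ ^ 2)

/-- The closed geodesic Euclidean ball of radius `R` centered at `y` in `𝕋ⁿ`. -/
def torusBall {n : ℕ} (y : Fin n → AddCircle (1:ℝ)) (R : ℝ) :
    Set (Fin n → AddCircle (1:ℝ)) :=
  {t | torusDist t y ≤ R}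

/-- The measure `μ_G` of a set `B ⊆ 𝕋ⁿ`: the proportion of `x ∈ 𝔽_p^m` with `G(x)/p ∈ B`. -/
noncomputable def muG (p m n : ℕ) [NeZero p] (G : Fin n → MvPolynomial (Fin m) (ZMod p))
    (B : Set (Fin n → AddCircle (1:ℝ))) : ℝ :=
  (Nat.card {x : Fin m → ZMod p // torusPoint p m n G x ∈ B} : ℝ) / (p : ℝ) ^ m

/-- The Lebesgue volume of a Euclidean `n`-ball of radius `R`. -/
noncomputable def ballVol (n : ℕ) (R : ℝ) : ℝ :=
  (volume (Metric.closedBall (0 : EuclideanSpace ℝ (Fin n)) R)).toReal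

/-- The `v`-th Fourier coefficient `f̂(v) = ∫_{𝕋ⁿ} f(t) e(-v·t) dt`. -/
noncomputable def fourierCoeffTorus (n : ℕ) (f : (Fin n → AddCircle (1:ℝ)) → ℂ)
    (v : Fin n → ℤ) : ℂ :=
  ∫ t : Fin n → AddCircle (1:ℝ), f t * ∏ j, fourier (-(v j)) (t j)

section EquiAux

open Submodule Complex
open scoped ENNReal NNReal

lemma volume_eq_haar : (volume : Measure (AddCircle (1:ℝ))) = AddCircle.haarAddCircle := by
  rw [AddCircle.volume_eq_smul_haarAddCircle]; simp

instance : IsProbabilityMeasure (volume : Measure (AddCircle (1:ℝ))) := by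
  rw [volume_eq_haar]; infer_instance

instance : (volume : Measure (AddCircle (1:ℝ))).IsOpenPosMeasure := by
  rw [volume_eq_haar]; infer_instance

lemma integral_fourier_one (k : ℤ) :
    (∫ t : AddCircle (1:ℝ), fourier k t) = if k = 0 then 1 else 0 := by
  split_ifs with h
  · subst h
    have : (fun t : AddCircle (1:ℝ) => (fourier 0 t : ℂ)) = fun _ => 1 := by
      ext t; exact fourier_zero
    rw [this, integral_const]; simp
  · rw [volume_eq_haar]
    exact integral_eq_zero_of_add_right_eq_neg (fourier_add_half_inv_index h one_pos)

noncomputable def char (n : ℕ) (v : Fin n → ℤ) : C((Fin n → AddCircle (1:ℝ)), ℂ) :=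
  ⟨fun t => ∏ j, fourier (v j) (t j),
    continuous_finset_prod _ fun j _ => ((fourier (v j)).continuous).comp (continuous_apply j)⟩

@[simp] lemma char_apply (n : ℕ) (v : Fin n → ℤ) (t : Fin n → AddCircle (1:ℝ)) :
    char n v t = ∏ j, fourier (v j) (t j) := rfl

lemma norm_fourier_apply (k : ℤ) (x : AddCircle (1:ℝ)) : ‖fourier k x‖ = 1 :=
  Circle.norm_coe _

lemma norm_char_apply (n : ℕ) (v : Fin n → ℤ) (t : Fin n → AddCircle (1:ℝ)) :
    ‖char n v t‖ = 1 := by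
  rw [char_apply, norm_prod]
  simp [norm_fourier_apply, Circle.norm_coe]

lemma norm_char (n : ℕ) (v : Fin n → ℤ) : ‖char n v‖ = 1 := by
  rw [ContinuousMap.norm_eq_iSup_norm]
  simp_rw [norm_char_apply]
  exact ciSup_const

lemma char_zero (n : ℕ) : char n 0 = 1 := by
  ext t; simp [fourier_zero]

lemma char_add (n : ℕ) (v w : Fin n → ℤ) : char n (v + w) = char n v * char n w := by
  ext t
  simp [fourier_add, Finset.prod_mul_distrib]

lemma star_char (n : ℕ) (v : Fin n → ℤ) : star (char n v) = char n (-v) := by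
  ext t
  simp only [ContinuousMap.star_apply, char_apply, Pi.neg_apply]
  rw [show (star (∏ j : Fin n, (fourier (v j)) (t j)) : ℂ)
      = (starRingEnd ℂ) (∏ j : Fin n, (fourier (v j)) (t j)) from rfl, map_prod]
  exact (Finset.prod_congr rfl fun j _ => fourier_neg).symm

lemma integral_char (n : ℕ) (v : Fin n → ℤ) :
    (∫ t : Fin n → AddCircle (1:ℝ), char n v t) = if v = 0 then 1 else 0 := by
  have h1 : (∫ t : Fin n → AddCircle (1:ℝ), char n v t)
      = ∏ j, ∫ x : AddCircle (1:ℝ), fourier (v j) x := by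
    exact MeasureTheory.integral_fintype_prod_eq_prod (𝕜 := ℂ) (ι := Fin n) (μ := fun _ => volume)
      (fun j (x : AddCircle (1:ℝ)) => (fourier (v j) x : ℂ))
  rw [h1]
  simp_rw [integral_fourier_one]
  by_cases h : v = 0
  · simp [h]
  · obtain ⟨j, hj⟩ : ∃ j, v j ≠ 0 := by
      by_contra hc; push_neg at hc; exact h (funext hc)
    rw [if_neg h]
    exact Finset.prod_eq_zero (Finset.mem_univ j) (by simp [hj])

noncomputable def charAlg (n : ℕ) : StarSubalgebra ℂ C((Fin n → AddCircle (1:ℝ)), ℂ) where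
  toSubalgebra := Algebra.adjoin ℂ (Set.range (char n))
  star_mem' := by
    show Algebra.adjoin ℂ (Set.range (char n)) ≤ star (Algebra.adjoin ℂ (Set.range (char n)))
    refine Algebra.adjoin_le ?_
    rintro - ⟨v, rfl⟩
    rw [SetLike.mem_coe, Subalgebra.mem_star_iff, star_char]
    exact Algebra.subset_adjoin ⟨-v, rfl⟩

theorem charAlg_coe (n : ℕ) :
    Subalgebra.toSubmodule (charAlg n).toSubalgebra = span ℂ (Set.range (char n)) := by
  apply Algebra.adjoin_eq_span_of_subset
  refine Set.Subset.trans ?_ Submodule.subset_span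
  intro x hx
  refine Submonoid.closure_induction (fun _ => id) ⟨0, ?_⟩ ?_ hx
  · exact char_zero n
  · rintro - - - - ⟨v, rfl⟩ ⟨w, rfl⟩
    exact ⟨v + w, (char_add n v w)⟩

theorem charAlg_separatesPoints (n : ℕ) : (charAlg n).SeparatesPoints := by
  intro t y hty
  obtain ⟨j, hj⟩ : ∃ j, t j ≠ y j := by
    by_contra hc; push_neg at hc; exact hty (funext hc)
  refine ⟨_, ⟨char n (Pi.single j 1), Algebra.subset_adjoin ⟨Pi.single j 1, rfl⟩, rfl⟩, ?_⟩
  have heval : ∀ s : Fin n → AddCircle (1:ℝ),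
      char n (Pi.single j 1) s = AddCircle.toCircle (s j) := by
    intro s
    rw [char_apply]
    rw [Finset.prod_eq_single j (fun k _ hk => by
      simp [Pi.single_eq_of_ne hk, fourier_zero]) (by simp)]
    simp [Pi.single_eq_same, fourier_one]
  dsimp only
  rw [heval, heval]
  intro hc
  rw [Circle.coe_inj] at hc
  exact hj (AddCircle.injective_toCircle one_ne_zero hc)

theorem charAlg_closure_eq_top (n : ℕ) : (charAlg n).topologicalClosure = ⊤ :=
  ContinuousMap.starSubalgebra_topologicalClosure_eq_top_of_separatesPoints (charAlg n)
    (charAlg_separatesPoints n)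

theorem span_char_closure_eq_top (n : ℕ) :
    (span ℂ (Set.range (char n))).topologicalClosure = ⊤ := by
  rw [← charAlg_coe]
  exact congr_arg (Subalgebra.toSubmodule <| StarSubalgebra.toSubalgebra ·)
    (charAlg_closure_eq_top n)

lemma cont_integrable {n : ℕ} (φ : (Fin n → AddCircle (1:ℝ)) → ℂ) (hφ : Continuous φ) :
    Integrable φ (volume : Measure (Fin n → AddCircle (1:ℝ))) :=
  hφ.integrable_of_hasCompactSupport ((isClosed_tsupport φ).isCompact)

theorem eq_zero_of_int_char_zero (n : ℕ) (h : C((Fin n → AddCircle (1:ℝ)), ℂ))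
    (hz : ∀ v, (∫ t : Fin n → AddCircle (1:ℝ), h t * char n v t) = 0) : h = 0 := by
  have hint : ∀ φ : C((Fin n → AddCircle (1:ℝ)), ℂ),
      Integrable (fun t => h t * φ t) volume :=
    fun φ => cont_integrable _ (h.continuous.mul φ.continuous)
  have hspan : ∀ φ ∈ span ℂ (Set.range (char n)),
      (∫ t : Fin n → AddCircle (1:ℝ), h t * φ t) = 0 := by
    intro φ hφ
    induction hφ using Submodule.span_induction with
    | mem x hx => obtain ⟨v, rfl⟩ := hx; exact hz v
    | zero => simp
    | add x y hx hy ihx ihy =>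
        have : (fun t => h t * (x + y) t) = (fun t => h t * x t) + (fun t => h t * y t) := by
          ext t; simp [mul_add]
        rw [this, integral_add' (hint x) (hint y)]
        rw [ihx, ihy, add_zero]
    | smul c x hx ih =>
        have : (fun t => h t * (c • x) t) = fun t => c • (h t * x t) := by
          ext t; simp [ContinuousMap.smul_apply]; ring
        rw [this, integral_smul, ih, smul_zero]
  -- star h is approximable
  have hscl : (star h : C((Fin n → AddCircle (1:ℝ)), ℂ)) ∈
      closure (span ℂ (Set.range (char n)) : Set C((Fin n → AddCircle (1:ℝ)), ℂ)) := by
    rw [← Submodule.topologicalClosure_coe, span_char_closure_eq_top]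
    trivial
  have key : (∫ t : Fin n → AddCircle (1:ℝ), ‖h t‖ ^ 2) = 0 := by
    have hIc : (∫ t : Fin n → AddCircle (1:ℝ), h t * star h t)
        = ((∫ t : Fin n → AddCircle (1:ℝ), ‖h t‖ ^ 2 : ℝ) : ℂ) := by
      have h2 : (∫ t : Fin n → AddCircle (1:ℝ), h t * star h t)
          = ∫ t : Fin n → AddCircle (1:ℝ), ((‖h t‖ ^ 2 : ℝ) : ℂ) := by
        congr 1; ext t
        rw [show (star h) t = starRingEnd ℂ (h t) from rfl, Complex.mul_conj]
        rw [Complex.normSq_eq_norm_sq]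
      rw [h2]
      exact integral_ofReal
    have habs : ∀ ε > (0:ℝ), ‖(∫ t : Fin n → AddCircle (1:ℝ), h t * star h t)‖ ≤ (‖h‖ + 1) * ε := by
      intro ε hε
      obtain ⟨φ, hφmem, hφd⟩ := Metric.mem_closure_iff.mp hscl ε hε
      have hsplit : (∫ t : Fin n → AddCircle (1:ℝ), h t * star h t)
          = (∫ t : Fin n → AddCircle (1:ℝ), h t * (star h - φ) t)
            + (∫ t : Fin n → AddCircle (1:ℝ), h t * φ t) := by
        rw [← integral_add (hint _) (hint _)]
        congr 1; ext t
        simp [ContinuousMap.sub_apply]; ring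
      rw [hsplit, hspan φ hφmem, add_zero]
      have hb : ∀ t, ‖h t * (star h - φ) t‖ ≤ (‖h‖ + 1) * ε := by
        intro t
        rw [norm_mul]
        have h1 : ‖h t‖ ≤ ‖h‖ + 1 :=
          le_trans (h.norm_coe_le_norm t) (by linarith)
        have h2 : ‖(star h - φ) t‖ ≤ ε :=
          le_trans ((star h - φ).norm_coe_le_norm t) (by
            rw [← dist_eq_norm]; exact le_of_lt hφd)
        exact mul_le_mul h1 h2 (norm_nonneg _) (by positivity)
      calc ‖∫ t : Fin n → AddCircle (1:ℝ), h t * (star h - φ) t‖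
          ≤ (‖h‖ + 1) * ε * (volume (Set.univ : Set (Fin n → AddCircle (1:ℝ)))).toReal :=
            norm_integral_le_of_norm_le_const (Filter.Eventually.of_forall hb)
        _ = (‖h‖ + 1) * ε := by simp
    have hzero : (∫ t : Fin n → AddCircle (1:ℝ), h t * star h t) = 0 := by
      by_contra hne
      have hpos : 0 < ‖(∫ t : Fin n → AddCircle (1:ℝ), h t * star h t)‖ := norm_pos_iff.mpr hne
      have := habs (‖(∫ t : Fin n → AddCircle (1:ℝ), h t * star h t)‖ / (2 * (‖h‖ + 1)))
        (by positivity)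
      have hh1 : (0:ℝ) < ‖h‖ + 1 := by positivity
      set X := ‖(∫ t : Fin n → AddCircle (1:ℝ), h t * star h t)‖ with hX
      have heq : (‖h‖ + 1) * (X / (2 * (‖h‖ + 1))) = X / 2 := by
        field_simp
      rw [heq] at this
      linarith
    rw [hIc] at hzero
    exact_mod_cast congrArg Complex.re hzero
  -- conclude h = 0
  have hcont : Continuous fun t : Fin n → AddCircle (1:ℝ) => ‖h t‖ ^ 2 :=
    (h.continuous.norm.pow 2)
  have hnn : 0 ≤ fun t : Fin n → AddCircle (1:ℝ) => ‖h t‖ ^ 2 := fun t => by positivity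
  have hInt : Integrable (fun t : Fin n → AddCircle (1:ℝ) => ‖h t‖ ^ 2) volume := by
    exact hcont.integrable_of_hasCompactSupport ((isClosed_tsupport _).isCompact)
  have hae := (integral_eq_zero_iff_of_nonneg hnn hInt).mp key
  have : (fun t : Fin n → AddCircle (1:ℝ) => ‖h t‖ ^ 2) = fun _ => 0 :=
    (Continuous.ae_eq_iff_eq volume hcont continuous_const).mp hae
  ext t
  have ht := congrFun this t
  simp only [ContinuousMap.zero_apply]
  have : ‖h t‖ = 0 := by nlinarith [sq_nonneg ‖h t‖, norm_nonneg (h t)]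
  exact norm_eq_zero.mp this

lemma coeff_eq (n : ℕ) (f : (Fin n → AddCircle (1:ℝ)) → ℂ) (v : Fin n → ℤ) :
    fourierCoeffTorus n f v = ∫ t : Fin n → AddCircle (1:ℝ), f t * char n (-v) t := by
  unfold fourierCoeffTorus
  simp [char_apply]

theorem inversion (n : ℕ) (f : (Fin n → AddCircle (1:ℝ)) → ℂ) (hf : Continuous f)
    (hsum : Summable fun v : Fin n → ℤ => ‖fourierCoeffTorus n f v‖) (t : Fin n → AddCircle (1:ℝ)) :
    f t = ∑' v : Fin n → ℤ, fourierCoeffTorus n f v * char n v t := by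
  set a : (Fin n → ℤ) → ℂ := fourierCoeffTorus n f with ha
  have hFsum : Summable (fun v : Fin n → ℤ => a v • char n v) :=
    Summable.of_norm (by
      simpa only [norm_smul, norm_char, mul_one] using hsum)
  set g : C((Fin n → AddCircle (1:ℝ)), ℂ) := ∑' v : Fin n → ℤ, a v • char n v with hg
  have hg_apply : ∀ s, g s = ∑' v : Fin n → ℤ, a v * char n v s := by
    intro s
    rw [hg, ← ContinuousMap.tsum_apply hFsum s]
    exact tsum_congr fun v => rfl
  have hnnchar : ∀ (w : Fin n → ℤ) (s : Fin n → AddCircle (1:ℝ)), ‖char n w s‖₊ = 1 := by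
    intro w s
    exact NNReal.coe_injective (by rw [coe_nnnorm, NNReal.coe_one, norm_char_apply])
  have key : ∀ v : Fin n → ℤ, (∫ s : Fin n → AddCircle (1:ℝ), g s * char n v s) = a (-v) := by
    intro v
    have h1 : ∀ s, g s * char n v s = ∑' w : Fin n → ℤ, a w * char n (w + v) s := by
      intro s
      rw [hg_apply s, ← tsum_mul_right]
      exact tsum_congr fun w => by rw [mul_assoc, char_add]; rfl
    have hmeas : ∀ w : Fin n → ℤ,
        AEStronglyMeasurable (fun s : Fin n → AddCircle (1:ℝ) => a w * char n (w + v) s) volume :=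
      fun w => (continuous_const.mul (char n (w + v)).continuous).aestronglyMeasurable
    have hlin : ∀ w : Fin n → ℤ,
        (∫⁻ s : Fin n → AddCircle (1:ℝ), ‖a w * char n (w + v) s‖₊ ∂volume) = (‖a w‖₊ : ℝ≥0∞) := by
      intro w
      have : ∀ s : Fin n → AddCircle (1:ℝ),
          ((‖a w * char n (w + v) s‖₊ : ℝ≥0∞)) = (‖a w‖₊ : ℝ≥0∞) := by
        intro s; rw [nnnorm_mul, hnnchar, mul_one]
      rw [lintegral_congr this, lintegral_const]
      simp
    have hfin : (∑' w : Fin n → ℤ, ∫⁻ s : Fin n → AddCircle (1:ℝ),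
        ‖a w * char n (w + v) s‖₊ ∂volume) ≠ ⊤ := by
      rw [tsum_congr hlin]
      rw [← ENNReal.coe_tsum (NNReal.summable_coe.mp (by simpa [coe_nnnorm] using hsum))]
      exact ENNReal.coe_ne_top
    rw [show (fun s : Fin n → AddCircle (1:ℝ) => g s * char n v s)
        = fun s => ∑' w : Fin n → ℤ, a w * char n (w + v) s from funext h1]
    rw [integral_tsum hmeas hfin]
    have h2 : ∀ w : Fin n → ℤ, (∫ s : Fin n → AddCircle (1:ℝ), a w * char n (w + v) s)
        = if w = -v then a w else 0 := by
      intro w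
      rw [MeasureTheory.integral_const_mul, integral_char]
      by_cases h : w = -v
      · rw [if_pos (by simp [h]), if_pos h, mul_one]
      · rw [if_neg (fun hc => h (eq_neg_of_add_eq_zero_left hc)), if_neg h, mul_zero]
    rw [tsum_congr h2, tsum_eq_single (-v) (fun w hw => by rw [if_neg hw])]
    rw [if_pos rfl]
  -- h := f - g has zero coefficients
  have hzero : ContinuousMap.mk f hf - g = 0 := by
    apply eq_zero_of_int_char_zero
    intro v
    have hsub : (fun s : Fin n → AddCircle (1:ℝ) => (ContinuousMap.mk f hf - g) s * char n v s)
        = fun s => f s * char n v s - g s * char n v s := by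
      funext s; simp [sub_mul]
    rw [hsub, integral_sub (cont_integrable (fun s => f s * char n v s) (hf.mul (char n v).continuous))
      (cont_integrable (fun s => g s * char n v s) (g.continuous.mul (char n v).continuous))]
    rw [key v]
    have : (∫ s : Fin n → AddCircle (1:ℝ), f s * char n v s) = a (-v) := by
      rw [ha, coeff_eq n f (-v), neg_neg]
    rw [this, sub_self]
  have hfg : f t = g t := by
    have := congrFun (congrArg (fun φ : C((Fin n → AddCircle (1:ℝ)), ℂ) => (φ : _ → ℂ)) hzero) t
    simpa [sub_eq_zero] using this
  rw [hfg, hg_apply t]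

lemma abs_ep (p : ℕ) (r : ℤ) : ‖ep p r‖ = 1 := by
  unfold ep
  rw [show (2 * Real.pi * Complex.I * r / p : ℂ) = ((2 * Real.pi * r / p : ℝ) : ℂ) * Complex.I by
    push_cast; ring]
  exact Complex.norm_exp_ofReal_mul_I _

lemma ep_zero (p : ℕ) : ep p 0 = 1 := by
  unfold ep; simp

lemma ep_congr (p : ℕ) [NeZero p] {r s : ℤ} (h : ((r : ZMod p) : ZMod p) = (s : ZMod p)) :
    ep p r = ep p s := by
  have hp : (p : ℂ) ≠ 0 := Nat.cast_ne_zero.mpr (NeZero.ne p)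
  have hdvd : (p : ℤ) ∣ r - s := by
    rwa [← ZMod.intCast_zmod_eq_zero_iff_dvd, Int.cast_sub, sub_eq_zero]
  obtain ⟨k, hk⟩ := hdvd
  have hr : r = s + p * k := by linarith
  subst hr
  unfold ep
  rw [show (2 * Real.pi * Complex.I * ((s + p * k : ℤ) : ℂ) / p : ℂ)
      = 2 * Real.pi * Complex.I * s / p + k * (2 * Real.pi * Complex.I) by
    push_cast; field_simp]
  rw [Complex.exp_add, Complex.exp_int_mul_two_pi_mul_I, mul_one]

lemma char_torusPoint (p m n : ℕ) [NeZero p] (G : Fin n → MvPolynomial (Fin m) (ZMod p))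
    (v : Fin n → ℤ) (x : Fin m → ZMod p) :
    char n v (torusPoint p m n G x)
      = ep p (((∑ j, (v j : ZMod p) * MvPolynomial.eval x (G j)).val : ℕ) : ℤ) := by
  have h1 : char n v (torusPoint p m n G x)
      = ep p (∑ j, v j * ((MvPolynomial.eval x (G j)).val : ℤ)) := by
    rw [char_apply]
    unfold torusPoint ep
    simp_rw [fourier_coe_apply]
    rw [← Complex.exp_sum]
    congr 1
    push_cast
    rw [Finset.mul_sum, Finset.sum_div]
    refine Finset.sum_congr rfl fun j _ => ?_
    have hp : (p : ℂ) ≠ 0 := Nat.cast_ne_zero.mpr (NeZero.ne p)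
    field_simp
  rw [h1]
  apply ep_congr
  push_cast [ZMod.natCast_val, ZMod.intCast_cast, ZMod.cast_id]
  rfl

lemma norm_weylSum_le (p m n : ℕ) [NeZero p] (G : Fin n → MvPolynomial (Fin m) (ZMod p))
    (v : Fin n → ℤ) : ‖weylSum p m n G v‖ ≤ (p : ℝ) ^ m := by
  unfold weylSum
  calc ‖∑ x : Fin m → ZMod p, _‖
      ≤ ∑ x : Fin m → ZMod p, ‖ep p _‖ := by
        exact norm_sum_le _ _
    _ = (p : ℝ) ^ m := by
        simp_rw [abs_ep]
        rw [Finset.sum_const, Finset.card_univ]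
        simp [ZMod.card]

lemma weylSum_of_dvd (p m n : ℕ) [NeZero p] (G : Fin n → MvPolynomial (Fin m) (ZMod p))
    (v : Fin n → ℤ) (h : ∀ j, (p : ℤ) ∣ v j) :
    weylSum p m n G v = ((p : ℂ)) ^ m := by
  unfold weylSum
  have hz : ∀ j, ((v j : ZMod p)) = 0 := fun j =>
    (ZMod.intCast_zmod_eq_zero_iff_dvd _ _).mpr (h j)
  have : ∀ x : Fin m → ZMod p,
      (∑ j, (v j : ZMod p) * MvPolynomial.eval x (G j)) = 0 := by
    intro x
    refine Finset.sum_eq_zero fun j _ => by rw [hz j, zero_mul]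
  simp_rw [this]
  rw [ZMod.val_zero]
  simp only [Nat.cast_zero, ep_zero]
  rw [Finset.sum_const, Finset.card_univ]
  simp [ZMod.card]

end EquiAux

/-- Equidistribution: if `G^{(p)}` is of type `η > 0` over `𝔽_p` with uniformly bounded
implied constant, then `∫ f dμ_{G^{(p)}} → ∫ f dx` as `p → ∞`, for every continuous `f`
with absolutely summable Fourier series. -/
theorem equidistribution_muG (n m : ℕ) (hn : 2 ≤ n) (hm : 1 ≤ m) (η C₀ : ℝ)
    (hη : 0 < η) (hC₀ : 0 < C₀)
    (G : (p : ℕ) → Fin n → MvPolynomial (Fin m) (ZMod p))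
    (hG : ∀ (p : ℕ) [NeZero p], p.Prime →
      ∀ v : Fin n → ℤ, ¬ (∀ j, (p : ℤ) ∣ v j) →
        ‖weylSum p m n (G p) v‖ ≤ C₀ * (p : ℝ) ^ ((m : ℝ) - η))
    (f : (Fin n → AddCircle (1:ℝ)) → ℂ) (hf : Continuous f)
    (hsum : Summable (fun v : Fin n → ℤ => ‖fourierCoeffTorus n f v‖)) :
    ∀ ε > 0, ∃ P : ℕ, ∀ (p : ℕ) [NeZero p], P ≤ p → p.Prime →
      ‖(1 / (p : ℂ) ^ m) * (∑ x : Fin m → ZMod p, f (torusPoint p m n (G p) x))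
          - ∫ t : Fin n → AddCircle (1:ℝ), f t‖ ≤ ε := by
  intro ε hε
  set a : (Fin n → ℤ) → ℂ := fourierCoeffTorus n f with ha
  set M : ℝ := ∑' v : Fin n → ℤ, ‖a v‖ with hM
  obtain ⟨F, hF⟩ : ∃ F : Finset (Fin n → ℤ), (∑' x : {x : Fin n → ℤ // x ∉ F}, ‖a x‖) < ε/2 := by
    have := (tendsto_order.1 (tendsto_tsum_compl_atTop_zero
      (fun v : Fin n → ℤ => ‖a v‖))).2 (ε/2) (by linarith)
    exact this.exists
  set B : ℕ := F.sup (fun v => Finset.univ.sup fun j => (v j).natAbs) with hB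
  obtain ⟨P₂, hP₂⟩ : ∃ P₂ : ℕ, ∀ q : ℕ, q ≥ P₂ → C₀ * (q:ℝ) ^ (-η) * M < ε/2 := by
    have h0 : Filter.Tendsto (fun q : ℕ => C₀ * (q:ℝ) ^ (-η) * M) Filter.atTop (nhds 0) := by
      have h1 : Filter.Tendsto (fun x : ℝ => x ^ (-η)) Filter.atTop (nhds 0) :=
        tendsto_rpow_neg_atTop hη
      have h2 := ((h1.comp tendsto_natCast_atTop_atTop).const_mul C₀).mul_const M
      simpa using h2
    exact Filter.eventually_atTop.mp (h0.eventually_lt_const (by linarith))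
  refine ⟨max (B + 1) P₂, ?_⟩
  intro p _ hP hp
  have hp1 : 1 ≤ p := hp.one_lt.le
  have hppos : (0:ℝ) < (p:ℝ) := by exact_mod_cast hp.pos
  have hPc : ((p:ℂ)) ^ m ≠ 0 := pow_ne_zero _ (Nat.cast_ne_zero.mpr hp.pos.ne')
  have hPr : ((p:ℝ)) ^ m ≠ 0 := pow_ne_zero _ hppos.ne'
  set pt : (Fin m → ZMod p) → (Fin n → AddCircle (1:ℝ)) := torusPoint p m n (G p) with hpt
  set W : (Fin n → ℤ) → ℂ := weylSum p m n (G p) with hW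
  -- pointwise summability
  have hsum_x : ∀ x : Fin m → ZMod p, Summable (fun v : Fin n → ℤ => a v * char n v (pt x)) := by
    intro x
    refine Summable.of_norm (Summable.of_nonneg_of_le (fun v => norm_nonneg _) (fun v => ?_) hsum)
    rw [norm_mul, norm_char_apply, mul_one]
  -- key identity
  have hkey : (1 / (p : ℂ) ^ m) * (∑ x : Fin m → ZMod p, f (pt x))
      = ∑' v : Fin n → ℤ, a v * W v / (p:ℂ)^m := by
    have h1 : ∑ x : Fin m → ZMod p, f (pt x)
        = ∑ x : Fin m → ZMod p, ∑' v : Fin n → ℤ, a v * char n v (pt x) :=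
      Finset.sum_congr rfl fun x _ => inversion n f hf hsum (pt x)
    rw [h1, ← Summable.tsum_finsetSum (fun x _ => hsum_x x), ← tsum_mul_left]
    refine tsum_congr fun v => ?_
    rw [← Finset.mul_sum]
    have h2 : ∑ x : Fin m → ZMod p, (char n v (pt x) : ℂ) = W v := by
      rw [hW]
      unfold weylSum
      exact Finset.sum_congr rfl fun x _ => char_torusPoint p m n (G p) v x
    rw [h2]
    field_simp
  have hint0 : (∫ t : Fin n → AddCircle (1:ℝ), f t) = a 0 := by
    rw [ha]
    unfold fourierCoeffTorus
    have : ∀ t : Fin n → AddCircle (1:ℝ),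
        f t * ∏ j, fourier (-((0 : Fin n → ℤ) j)) (t j) = f t := by
      intro t
      have : ∀ j, (fourier (-((0 : Fin n → ℤ) j)) (t j) : ℂ) = 1 := by
        intro j; simp [fourier_zero]
      rw [Finset.prod_congr rfl fun j _ => this j]
      simp
    rw [integral_congr_ae (Filter.Eventually.of_forall this)]
  -- the series c
  set c : (Fin n → ℤ) → ℂ := fun v => a v * W v / (p:ℂ)^m - (if v = 0 then a 0 else 0) with hc
  have habsW : ∀ v, ‖a v * W v / (p:ℂ)^m‖ = ‖a v‖ * ‖W v‖ / (p:ℝ)^m := by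
    intro v
    rw [norm_div, norm_mul]
    congr 1
    rw [norm_pow, Complex.norm_natCast]
  have hsummable1 : Summable (fun v : Fin n → ℤ => a v * W v / (p:ℂ)^m) := by
    refine Summable.of_norm (Summable.of_nonneg_of_le (fun v => norm_nonneg _) (fun v => ?_) hsum)
    rw [habsW, mul_div_assoc]
    calc ‖a v‖ * (‖W v‖ / (p:ℝ)^m) ≤ ‖a v‖ * 1 := by
          refine mul_le_mul_of_nonneg_left ?_ (norm_nonneg _)
          rw [div_le_one (by positivity)]
          exact norm_weylSum_le p m n (G p) v
      _ = ‖a v‖ := mul_one _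
  have hsummable2 : Summable (fun v : Fin n → ℤ => (if v = 0 then a 0 else 0 : ℂ)) := by
    apply summable_of_ne_finset_zero (s := ({0} : Finset (Fin n → ℤ)))
    intro v hv
    rw [if_neg (by simpa using hv)]
  have htsum_c : ∑' v : Fin n → ℤ, c v
      = (∑' v : Fin n → ℤ, a v * W v / (p:ℂ)^m) - a 0 := by
    rw [hc, Summable.tsum_sub hsummable1 hsummable2]
    congr 1
    rw [tsum_eq_single 0 (fun v hv => if_neg hv)]
    exact if_pos rfl
  -- the dominating series d
  set d : (Fin n → ℤ) → ℝ := fun v =>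
    Set.indicator ((↑F : Set (Fin n → ℤ))ᶜ) (fun v => ‖a v‖) v + C₀ * (p:ℝ) ^ (-η) * ‖a v‖
      with hd
  have hd_nonneg : ∀ v, 0 ≤ d v := by
    intro v
    have h1 : (0:ℝ) ≤ Set.indicator ((↑F : Set (Fin n → ℤ))ᶜ) (fun v => ‖a v‖) v :=
      Set.indicator_nonneg (fun v _ => norm_nonneg _) v
    have h2 : (0:ℝ) ≤ C₀ * (p:ℝ) ^ (-η) * ‖a v‖ := by positivity
    exact add_nonneg h1 h2
  have hd_sum : Summable d := by
    refine Summable.add (hsum.indicator _) ?_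
    exact hsum.mul_left _
  have hcd : ∀ v, ‖c v‖ ≤ d v := by
    intro v
    have hind_nonneg : (0:ℝ) ≤ Set.indicator ((↑F : Set (Fin n → ℤ))ᶜ) (fun v => ‖a v‖) v :=
      Set.indicator_nonneg (fun v _ => norm_nonneg _) v
    by_cases hvA : ∀ j, (p:ℤ) ∣ v j
    · have hWv : W v = (p:ℂ)^m := weylSum_of_dvd p m n (G p) v hvA
      by_cases hv0 : v = 0
      · subst hv0
        have : c 0 = 0 := by
          rw [hc]
          simp [hWv, mul_div_assoc, div_self hPc]
        rw [this, norm_zero]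
        exact hd_nonneg 0
      · have hcv : c v = a v := by
          rw [hc]
          simp only [if_neg hv0]
          rw [hWv, mul_div_assoc, div_self hPc, mul_one, sub_zero]
        have hvF : v ∉ (↑F : Set (Fin n → ℤ)) := by
          intro hvF
          obtain ⟨j, hj⟩ : ∃ j, v j ≠ 0 := by
            by_contra hcon; push_neg at hcon; exact hv0 (funext hcon)
          have hdvd : p ∣ (v j).natAbs := by
            have := Int.natAbs_dvd_natAbs.mpr (hvA j)
            simpa using this
          have hple : p ≤ (v j).natAbs :=
            Nat.le_of_dvd (Int.natAbs_pos.mpr hj) hdvd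
          have hle1 : (v j).natAbs ≤ Finset.univ.sup fun j => (v j).natAbs :=
            Finset.le_sup (f := fun j => (v j).natAbs) (Finset.mem_univ j)
          have hle2 : (Finset.univ.sup fun j => (v j).natAbs) ≤ B :=
            Finset.le_sup (f := fun v => Finset.univ.sup fun j => (v j).natAbs)
              (Finset.mem_coe.mp hvF)
          have hBp : B + 1 ≤ p := le_trans (le_max_left _ _) hP
          have hpB : p ≤ B := le_trans hple (le_trans hle1 hle2)
          exact Nat.not_succ_le_self B (le_trans hBp hpB)
        rw [hcv]
        have hind : Set.indicator ((↑F : Set (Fin n → ℤ))ᶜ) (fun v => ‖a v‖) v = ‖a v‖ :=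
          Set.indicator_of_mem (Set.mem_compl hvF) _
        have hpos2 : (0:ℝ) ≤ C₀ * (p:ℝ) ^ (-η) * ‖a v‖ := by positivity
        calc ‖a v‖ = Set.indicator ((↑F : Set (Fin n → ℤ))ᶜ) (fun v => ‖a v‖) v := hind.symm
          _ ≤ d v := le_add_of_nonneg_right hpos2
    · have hv0 : v ≠ 0 := by
        intro h; exact hvA (by simp [h])
      have hcv : c v = a v * W v / (p:ℂ)^m := by
        rw [hc]; simp only [if_neg hv0, sub_zero]
      have hbound : ‖c v‖ ≤ C₀ * (p:ℝ) ^ (-η) * ‖a v‖ := by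
        rw [hcv, habsW]
        have h1 : ‖W v‖ ≤ C₀ * (p:ℝ) ^ ((m:ℝ) - η) := hG p hp v hvA
        have h2 : (p:ℝ) ^ ((m:ℝ) - η) = (p:ℝ)^m * (p:ℝ)^(-η) := by
          rw [show (m:ℝ) - η = (m:ℝ) + (-η) by ring, Real.rpow_add hppos,
            Real.rpow_natCast]
        calc ‖a v‖ * ‖W v‖ / (p:ℝ)^m
            ≤ ‖a v‖ * (C₀ * ((p:ℝ)^m * (p:ℝ)^(-η))) / (p:ℝ)^m := by
              rw [h2] at h1
              gcongr
          _ = C₀ * (p:ℝ) ^ (-η) * ‖a v‖ := by field_simp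
      refine le_trans hbound ?_
      exact le_add_of_nonneg_left hind_nonneg
  have hsumc : Summable (fun v : Fin n → ℤ => ‖c v‖) :=
    Summable.of_nonneg_of_le (fun v => norm_nonneg _) hcd hd_sum
  -- assemble
  rw [hkey, hint0, ← htsum_c]
  have step1 : ‖∑' v : Fin n → ℤ, c v‖ ≤ ∑' v : Fin n → ℤ, ‖c v‖ :=
    norm_tsum_le_tsum_norm hsumc
  have step2 : (∑' v : Fin n → ℤ, ‖c v‖) ≤ ∑' v : Fin n → ℤ, d v :=
    Summable.tsum_le_tsum hcd hsumc hd_sum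
  have step3 : (∑' v : Fin n → ℤ, d v)
      = (∑' v : Fin n → ℤ, Set.indicator ((↑F : Set (Fin n → ℤ))ᶜ) (fun v => ‖a v‖) v)
        + C₀ * (p:ℝ) ^ (-η) * M := by
    rw [hd, Summable.tsum_add (hsum.indicator _) (hsum.mul_left _), tsum_mul_left]
  have step4 : (∑' v : Fin n → ℤ, Set.indicator ((↑F : Set (Fin n → ℤ))ᶜ) (fun v => ‖a v‖) v)
      = ∑' x : {x : Fin n → ℤ // x ∉ F}, ‖a x‖ := by
    rw [← tsum_subtype]
    exact Equiv.tsum_eq (Equiv.subtypeEquivRight (fun x => by simp))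
      (fun x : {x : Fin n → ℤ // x ∉ F} => ‖a ↑x‖)
  have step5 : C₀ * (p:ℝ) ^ (-η) * M < ε/2 :=
    hP₂ p (le_trans (le_max_right _ _) hP)
  calc ‖∑' v : Fin n → ℤ, c v‖ ≤ ∑' v : Fin n → ℤ, ‖c v‖ := step1
    _ ≤ ∑' v : Fin n → ℤ, d v := step2
    _ = _ + _ := step3
    _ ≤ ε/2 + ε/2 := by
        rw [step4]
        exact add_le_add hF.le step5.le
    _ = ε := by ring
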